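/- The polynomials A_{p,q}(t) := Σ_{k=0}^{q} γ_{k,p,q} t^k satisfy A_{p,0}(t) = A_{0,q}(t) = 1 for all p, q ≥ 0, and for all integers p, q ≥ 1 the recurrence A_{p,q}(t) = A_{p,q−1}(t) + A_{p−1,q}(t) + (p+q−1) · t · A_{p−1,q−1}(t) holds as an identity of polynomials. -/

import Mathlib

/-- A signed `(p,q)`-involution: a pair `(π, ε)` where `π` is an involution of
`{1,…,p+q}` and `ε` assigns a sign (`true` = `+`, `false` = `-`) to each fixed
point of `π` (we normalize `ε` to be `true` on non-fixed points), such that the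
number of fixed points with sign `+` minus the number of fixed points with
sign `-` equals `p - q`. -/
def IsSignedInv (p q : ℕ) (x : Equiv.Perm (Fin (p + q)) × (Fin (p + q) → Bool)) : Prop :=
  x.1 * x.1 = 1 ∧ (∀ i, x.1 i ≠ i → x.2 i = true) ∧
    ((Finset.univ.filter fun i => x.1 i = i ∧ x.2 i = true).card : ℤ) -
      ((Finset.univ.filter fun i => x.1 i = i ∧ x.2 i = false).card : ℤ) = (p : ℤ) - (q : ℤ)

/-- `γ_{k,p,q}`: the number of signed `(p,q)`-involutions whose underlying
involution has exactly `k` two-cycles, i.e. exactly `2k` non-fixed points. -/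
noncomputable def gammaCount (k p q : ℕ) : ℕ :=
  Nat.card {x : Equiv.Perm (Fin (p + q)) × (Fin (p + q) → Bool) //
    IsSignedInv p q x ∧ (Finset.univ.filter fun i => x.1 i ≠ i).card = 2 * k}

/-- `α_{p,q}`: the number of signed `(p,q)`-involutions. -/
noncomputable def alphaCount (p q : ℕ) : ℕ :=
  Nat.card {x : Equiv.Perm (Fin (p + q)) × (Fin (p + q) → Bool) // IsSignedInv p q x}
/-- The generating polynomial `A_{p,q}(t) = ∑_{k=0}^{q} γ_{k,p,q} t^k`. -/
noncomputable def Apoly (p q : ℕ) : Polynomial ℕ :=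
  ∑ k ∈ Finset.range (q + 1), Polynomial.C (gammaCount k p q) * Polynomial.X ^ k


set_option linter.unusedSectionVars false
open Finset Equiv Polynomial

section helpers
variable {α : Type*} {β : Type*} [Fintype α] [DecidableEq α] [Fintype β] [DecidableEq β]

lemma natCard_sigma {ι : Type*} [Fintype ι] (f : ι → Type*) [∀ i, Finite (f i)] :
    Nat.card ((i : ι) × f i) = ∑ i, Nat.card (f i) := by
  letI := fun i => Fintype.ofFinite (f i)
  rw [Nat.card_eq_fintype_card, Fintype.card_sigma]
  exact Finset.sum_congr rfl fun i _ => (Nat.card_eq_fintype_card).symm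

lemma natCard_fiber {γ : Type*} [Finite γ] (f : γ → β) :
    Nat.card γ = ∑ b, Nat.card {x // f x = b} := by
  rw [← Nat.card_congr (Equiv.sigmaFiberEquiv f)]
  exact natCard_sigma _

lemma card_filter_equiv (e : α ≃ β) (P : β → Prop) [DecidablePred P] :
    (univ.filter fun a => P (e a)).card = (univ.filter P).card := by
  rw [← Fintype.card_subtype, ← Fintype.card_subtype]
  exact Fintype.card_congr (e.subtypeEquiv fun a => Iff.rfl)

lemma card_filter_split (P : α → Prop) (Q : α → Prop) [DecidablePred P] [DecidablePred Q] :
    (univ.filter P).card =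
      (univ.filter fun a => P a ∧ Q a).card + (univ.filter fun a => P a ∧ ¬ Q a).card := by
  rw [← Finset.card_filter_add_card_filter_not (p := Q) (s := univ.filter P),
    Finset.filter_filter, Finset.filter_filter]

lemma card_filter_eq_point (P : α → Prop) [DecidablePred P] (a : α) :
    (univ.filter fun b => P b ∧ b = a).card = if P a then 1 else 0 := by
  have : (univ.filter fun b => P b ∧ b = a) = if P a then {a} else ∅ := by
    split
    · next h =>
      ext b
      simp only [mem_filter, mem_univ, true_and, mem_singleton]
      constructor
      · rintro ⟨-, rfl⟩; rfl
      · rintro rfl; exact ⟨h, rfl⟩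
    · next h =>
      ext b
      simp only [mem_filter, mem_univ, true_and, notMem_empty, iff_false]
      rintro ⟨hb, rfl⟩
      exact h hb
  rw [this]; split <;> simp

lemma card_filter_point (P : α → Prop) [DecidablePred P] (a : α) :
    (univ.filter P).card = (univ.filter fun b => b ≠ a ∧ P b).card + (if P a then 1 else 0) := by
  rw [card_filter_split P (fun b => b ≠ a)]
  congr 1
  · exact congrArg _ (Finset.filter_congr fun b _ => by tauto)
  · rw [← card_filter_eq_point P a]
    exact congrArg _ (Finset.filter_congr fun b _ => by tauto)

lemma card_filter_subtype (p : α → Prop) [DecidablePred p] (P : α → Prop) [DecidablePred P] :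
    (univ.filter fun b : {b : α // p b} => P b.1).card = (univ.filter fun b => p b ∧ P b).card := by
  rw [← Fintype.card_subtype, ← Fintype.card_subtype]
  exact Fintype.card_congr (Equiv.subtypeSubtypeEquivSubtypeInter p P)

end helpers

section core
variable {α : Type*} {β : Type*} [Fintype α] [DecidableEq α] [Fintype β] [DecidableEq β]

def SIP (d : ℤ) (k : ℕ) (x : Equiv.Perm α × (α → Bool)) : Prop :=
  (x.1 * x.1 = 1 ∧ (∀ i, x.1 i ≠ i → x.2 i = true) ∧
    ((Finset.univ.filter fun i => x.1 i = i ∧ x.2 i = true).card : ℤ) -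
      ((Finset.univ.filter fun i => x.1 i = i ∧ x.2 i = false).card : ℤ) = d) ∧
  (Finset.univ.filter fun i => x.1 i ≠ i).card = 2 * k

variable {d : ℤ} {k : ℕ}

lemma SIP.invol {x : Equiv.Perm α × (α → Bool)} (hx : SIP d k x) (b : α) : x.1 (x.1 b) = b := by
  simpa [Equiv.Perm.mul_apply] using Equiv.ext_iff.mp hx.1.1 b

lemma SIP.eq_iff {x : Equiv.Perm α × (α → Bool)} (hx : SIP d k x) {b c : α} :
    x.1 b = c ↔ b = x.1 c := by
  constructor
  · rintro rfl; exact (hx.invol b).symm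
  · rintro rfl; exact hx.invol c

lemma SIP.balance {x : Equiv.Perm α × (α → Bool)} (hx : SIP d k x) :
    ((Finset.univ.filter fun i => x.1 i = i ∧ x.2 i = true).card : ℤ) +
      ((Finset.univ.filter fun i => x.1 i = i ∧ x.2 i = false).card : ℤ) =
      (Fintype.card α : ℤ) - 2 * k := by
  have h1 := card_filter_split (fun i : α => x.1 i = i) (fun i => x.2 i = true)
  have h2 : (univ.filter fun i : α => x.1 i = i).card +
      (univ.filter fun i : α => x.1 i ≠ i).card = Fintype.card α := by
    rw [← card_univ]
    exact Finset.card_filter_add_card_filter_not _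
  have h3 : (univ.filter fun i : α => x.1 i = i ∧ ¬ x.2 i = true)
      = (univ.filter fun i => x.1 i = i ∧ x.2 i = false) := by
    apply Finset.filter_congr; intro i _; simp
  have h4 := hx.2
  rw [h3] at h1
  omega

noncomputable def G (n : ℕ) (d : ℤ) (k : ℕ) : ℕ :=
  Nat.card {x : Equiv.Perm (Fin n) × (Fin n → Bool) // SIP d k x}

lemma G_eq_zero {n : ℕ} (h : (n : ℤ) - 2 * k < d ∨ d < 2 * k - (n : ℤ)) : G n d k = 0 := by
  rw [G, Nat.card_eq_zero]
  left
  constructor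
  rintro ⟨x, hx⟩
  have hb := hx.balance
  have hd := hx.1.2.2
  rw [Fintype.card_fin] at hb
  have ht : (0 : ℤ) ≤ ((univ.filter fun i => x.1 i = i ∧ x.2 i = true).card : ℤ) :=
    Int.natCast_nonneg _
  have hf : (0 : ℤ) ≤ ((univ.filter fun i => x.1 i = i ∧ x.2 i = false).card : ℤ) :=
    Int.natCast_nonneg _
  omega

lemma G_const (n : ℕ) (s : Bool) : G n (if s then (n : ℤ) else -(n : ℤ)) 0 = 1 := by
  have hchar : ∀ z : Equiv.Perm (Fin n) × (Fin n → Bool),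
      SIP (if s then (n : ℤ) else -(n : ℤ)) 0 z → z.1 = 1 ∧ z.2 = fun _ => s := by
    rintro ⟨σ, ε⟩ hz
    have hfix : ∀ i, σ i = i := by
      intro i
      by_contra hi
      have hmem : i ∈ univ.filter fun j => σ j ≠ j := by simp [hi]
      have h0 := hz.2
      rw [Nat.mul_zero, Finset.card_eq_zero] at h0
      rw [h0] at hmem
      exact absurd hmem (Finset.notMem_empty i)
    have hb := hz.balance
    rw [Fintype.card_fin] at hb
    have hd := hz.1.2.2
    dsimp only at hb hd
    refine ⟨Equiv.ext hfix, funext fun i => ?_⟩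
    cases s with
    | true =>
      rw [if_pos rfl] at hd
      have hf0 : (univ.filter fun j : Fin n => σ j = j ∧ ε j = false).card = 0 := by omega
      rw [Finset.card_eq_zero] at hf0
      by_contra hne
      have hmem : i ∈ univ.filter fun j : Fin n => σ j = j ∧ ε j = false := by
        simp [hfix i, Bool.not_eq_true] at hne ⊢; exact hne
      rw [hf0] at hmem
      exact absurd hmem (Finset.notMem_empty i)
    | false =>
      rw [if_neg (by simp)] at hd
      have hf0 : (univ.filter fun j : Fin n => σ j = j ∧ ε j = true).card = 0 := by omega
      rw [Finset.card_eq_zero] at hf0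
      by_contra hne
      have hmem : i ∈ univ.filter fun j : Fin n => σ j = j ∧ ε j = true := by
        simp [hfix i, Bool.not_eq_false] at hne ⊢; exact hne
      rw [hf0] at hmem
      exact absurd hmem (Finset.notMem_empty i)
  have hel : SIP (α := Fin n) (if s then (n : ℤ) else -(n : ℤ)) 0 (1, fun _ => s) := by
    refine ⟨⟨one_mul 1, fun i hi => absurd rfl hi, ?_⟩, by simp⟩
    cases s <;> simp [Finset.filter_true_of_mem, Finset.card_univ]
  rw [G, Nat.card_eq_one_iff_unique]
  constructor
  · constructor
    rintro ⟨x, hx⟩ ⟨y, hy⟩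
    obtain ⟨hx1, hx2⟩ := hchar x hx
    obtain ⟨hy1, hy2⟩ := hchar y hy
    exact Subtype.ext (Prod.ext (hx1.trans hy1.symm) (hx2.trans hy2.symm))
  · exact ⟨⟨(1, fun _ => s), hel⟩⟩

lemma SIP.map (e : α ≃ β) {x : Equiv.Perm α × (α → Bool)} (hx : SIP d k x) :
    SIP d k (e.permCongr x.1, fun b => x.2 (e.symm b)) := by
  obtain ⟨⟨h1, h2, h3⟩, h4⟩ := hx
  have hmul : (e.permCongr x.1) * (e.permCongr x.1) = 1 := by
    ext b
    have := Equiv.ext_iff.mp h1 (e.symm b)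
    simp only [Equiv.Perm.mul_apply] at this ⊢
    simp [Equiv.permCongr_apply, this]
  have hiff : ∀ b : β, (e.permCongr x.1) b = b ↔ x.1 (e.symm b) = e.symm b := by
    intro b
    rw [Equiv.permCongr_apply, ← Equiv.symm_apply_eq]
    simp
  refine ⟨⟨hmul, ?_, ?_⟩, ?_⟩
  · intro i hi
    exact h2 _ fun h => hi (by rw [Equiv.permCongr_apply, h, Equiv.apply_symm_apply])
  · rw [show (univ.filter fun i : β => (e.permCongr x.1) i = i ∧ x.2 (e.symm i) = true)
        = (univ.filter fun i : β => x.1 (e.symm i) = e.symm i ∧ x.2 (e.symm i) = true) from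
        Finset.filter_congr fun b _ => by rw [hiff],
      show (univ.filter fun i : β => (e.permCongr x.1) i = i ∧ x.2 (e.symm i) = false)
        = (univ.filter fun i : β => x.1 (e.symm i) = e.symm i ∧ x.2 (e.symm i) = false) from
        Finset.filter_congr fun b _ => by rw [hiff]]
    rw [card_filter_equiv e.symm (fun a => x.1 a = a ∧ x.2 a = true),
      card_filter_equiv e.symm (fun a => x.1 a = a ∧ x.2 a = false)]
    exact h3
  · rw [show (univ.filter fun i : β => (e.permCongr x.1) i ≠ i)
        = (univ.filter fun i : β => x.1 (e.symm i) ≠ e.symm i) from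
        Finset.filter_congr fun b _ => by rw [ne_eq, hiff]]
    rw [card_filter_equiv e.symm (fun a => x.1 a ≠ a)]
    exact h4

noncomputable def SIPcongr (e : α ≃ β) (d : ℤ) (k : ℕ) :
    {x : Equiv.Perm α × (α → Bool) // SIP d k x} ≃
      {y : Equiv.Perm β × (β → Bool) // SIP d k y} where
  toFun x := ⟨(e.permCongr x.1.1, fun b => x.1.2 (e.symm b)), x.2.map e⟩
  invFun y := ⟨(e.symm.permCongr y.1.1, fun a => y.1.2 (e.symm.symm a)), y.2.map e.symm⟩
  left_inv x := by
    apply Subtype.ext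
    apply Prod.ext
    · ext a; simp
    · funext a; simp
  right_inv y := by
    apply Subtype.ext
    apply Prod.ext
    · ext b; simp
    · funext b; simp

lemma G_card_eq {γ : Type*} [Fintype γ] [DecidableEq γ] {n : ℕ} (h : Fintype.card γ = n)
    (d : ℤ) (k : ℕ) :
    Nat.card {x : Equiv.Perm γ × (γ → Bool) // SIP d k x} = G n d k :=
  Nat.card_congr (SIPcongr (Fintype.equivFinOfCardEq h) d k)

lemma card_filter_point_subtype (a : α) (P : α → Prop) [DecidablePred P]
    (Q : {b : α // b ≠ a} → Prop) [DecidablePred Q] (hQ : ∀ b, Q b ↔ P b.1) :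
    (univ.filter P).card = (univ.filter Q).card + (if P a then 1 else 0) := by
  rw [card_filter_point P a]
  congr 1
  rw [show (univ.filter Q) = univ.filter (fun b : {b : α // b ≠ a} => P b.1) from
    Finset.filter_congr fun b _ => hQ b, card_filter_subtype]

lemma card_filter_pair_subtype (a a' : α) (hne : a' ≠ a) (P : α → Prop) [DecidablePred P]
    (Q : {b : α // b ≠ a ∧ b ≠ a'} → Prop) [DecidablePred Q] (hQ : ∀ b, Q b ↔ P b.1) :
    (univ.filter P).card = (univ.filter Q).card
      + (if P a then 1 else 0) + (if P a' then 1 else 0) := by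
  have e1 := card_filter_point P a
  have e2 := card_filter_point (fun b => b ≠ a ∧ P b) a'
  have e3 : (univ.filter fun b => b ≠ a' ∧ b ≠ a ∧ P b).card = (univ.filter Q).card := by
    rw [show (univ.filter Q) = univ.filter (fun b : {b : α // b ≠ a ∧ b ≠ a'} => P b.1) from
      Finset.filter_congr fun b _ => hQ b, card_filter_subtype]
    exact congrArg _ (Finset.filter_congr fun b _ => by tauto)
  have e4 : (if a' ≠ a ∧ P a' then 1 else 0) = (if P a' then 1 else 0) := by simp [hne]
  omega

lemma SIP.hne {x : Equiv.Perm α × (α → Bool)} (hx : SIP d k x) {a : α} (ha : x.1 a = a) :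
    ∀ b : α, x.1 b ≠ a ↔ b ≠ a := by
  intro b
  apply not_congr
  rw [hx.eq_iff, ha]

lemma SIP.fixRemove_fwd {σ : Equiv.Perm α} {ε : α → Bool} {s : Bool} {a : α}
    (hx : SIP d k (σ, ε)) (ha : σ a = a) (hs : ε a = s)
    (h' : ∀ b : α, σ b ≠ a ↔ b ≠ a) :
    SIP (d - if s then 1 else -1) k
      (σ.subtypePerm h', fun b : {b : α // b ≠ a} => ε b.1) := by
  have hinv : ∀ b, σ (σ b) = b := fun b => hx.invol b
  have h2 : ∀ i, σ i ≠ i → ε i = true := hx.1.2.1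
  have h3 : ((univ.filter fun i => σ i = i ∧ ε i = true).card : ℤ)
      - ((univ.filter fun i => σ i = i ∧ ε i = false).card : ℤ) = d := hx.1.2.2
  have h4 : (univ.filter fun i => σ i ≠ i).card = 2 * k := hx.2
  have hQ : ∀ (s' : Bool) (b : {b : α // b ≠ a}),
      ((σ.subtypePerm h') b = b ∧ ε b.1 = s') ↔ ((σ b.1 = b.1 ∧ ε b.1 = s')) := by
    intro s' b
    rw [Subtype.ext_iff, Equiv.Perm.subtypePerm_apply]
  have kT := card_filter_point_subtype a (fun b => σ b = b ∧ ε b = true)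
    (fun b => (σ.subtypePerm h') b = b ∧ ε b.1 = true) (hQ true)
  have kF := card_filter_point_subtype a (fun b => σ b = b ∧ ε b = false)
    (fun b => (σ.subtypePerm h') b = b ∧ ε b.1 = false) (hQ false)
  have kM := card_filter_point_subtype a (fun b => σ b ≠ b)
    (fun b => (σ.subtypePerm h') b ≠ b)
    (fun b => by rw [ne_eq, ne_eq, Subtype.ext_iff, Equiv.Perm.subtypePerm_apply])
  refine ⟨⟨?_, ?_, ?_⟩, ?_⟩
  · ext b
    simp [Equiv.Perm.subtypePerm_apply, Subtype.ext_iff, hinv]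
  · intro b hb
    apply h2
    simpa [Subtype.ext_iff, Equiv.Perm.subtypePerm_apply] using hb
  · dsimp only
    cases s
    · rw [show (if (false : Bool) = true then (1:ℤ) else -1) = -1 from rfl]
      rw [if_neg (by simp [hs])] at kT
      rw [if_pos ⟨ha, hs⟩] at kF
      omega
    · rw [show (if (true : Bool) = true then (1:ℤ) else -1) = 1 from rfl]
      rw [if_pos ⟨ha, hs⟩] at kT
      rw [if_neg (by simp [hs])] at kF
      omega
  · dsimp only
    rw [if_neg (by simp [ha])] at kM
    omega

lemma SIP.fixRemove_bwd {a : α} {s : Bool} {τ : Equiv.Perm {b : α // b ≠ a}}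
    {δ : {b : α // b ≠ a} → Bool} (hy : SIP d k (τ, δ)) :
    SIP (d + if s then 1 else -1) k
      (Equiv.Perm.ofSubtype τ, fun b => if h : b = a then s else δ ⟨b, h⟩) := by
  have h1 : τ * τ = 1 := hy.1.1
  have h2 : ∀ i, τ i ≠ i → δ i = true := hy.1.2.1
  have h3 : ((univ.filter fun i => τ i = i ∧ δ i = true).card : ℤ)
      - ((univ.filter fun i => τ i = i ∧ δ i = false).card : ℤ) = d := hy.1.2.2
  have h4 : (univ.filter fun i => τ i ≠ i).card = 2 * k := hy.2
  have hfixa : Equiv.Perm.ofSubtype τ a = a :=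
    Equiv.Perm.ofSubtype_apply_of_not_mem τ (by simp)
  have happ : ∀ b : {b : α // b ≠ a}, Equiv.Perm.ofSubtype τ b.1 = (τ b).1 := by
    intro b
    rw [Equiv.Perm.ofSubtype_apply_of_mem τ b.2]
  have hQ : ∀ (s' : Bool) (b : {b : α // b ≠ a}),
      (τ b = b ∧ δ b = s') ↔
        (Equiv.Perm.ofSubtype τ b.1 = b.1 ∧
          (if h : b.1 = a then s else δ ⟨b.1, h⟩) = s') := by
    intro s' b
    rw [happ, dif_neg b.2, Subtype.ext_iff]
  have kT := card_filter_point_subtype a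
    (fun b => Equiv.Perm.ofSubtype τ b = b ∧ (if h : b = a then s else δ ⟨b, h⟩) = true)
    (fun b => τ b = b ∧ δ b = true) (hQ true)
  have kF := card_filter_point_subtype a
    (fun b => Equiv.Perm.ofSubtype τ b = b ∧ (if h : b = a then s else δ ⟨b, h⟩) = false)
    (fun b => τ b = b ∧ δ b = false) (hQ false)
  have kM := card_filter_point_subtype a (fun b => Equiv.Perm.ofSubtype τ b ≠ b)
    (fun b => τ b ≠ b)
    (fun b => by rw [ne_eq, ne_eq, happ, Subtype.ext_iff])
  refine ⟨⟨?_, ?_, ?_⟩, ?_⟩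
  · rw [← map_mul, h1, map_one]
  · intro i hi
    dsimp only at hi ⊢
    have hia : i ≠ a := fun h => hi (by rw [h, hfixa])
    rw [dif_neg hia]
    apply h2 ⟨i, hia⟩
    intro hc
    apply hi
    have := happ ⟨i, hia⟩
    rw [hc] at this
    exact this
  · dsimp only
    simp only [Finset.filter_congr_decidable] at kT kF h3 ⊢
    cases s
    · rw [show (if (false : Bool) = true then (1:ℤ) else -1) = -1 from rfl]
      rw [if_neg (by simp)] at kT
      rw [if_pos ⟨hfixa, by simp⟩] at kF
      omega
    · rw [show (if (true : Bool) = true then (1:ℤ) else -1) = 1 from rfl]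
      rw [if_pos ⟨hfixa, by simp⟩] at kT
      rw [if_neg (by simp)] at kF
      omega
  · dsimp only
    rw [if_neg (by simp [hfixa])] at kM
    omega

noncomputable def fixRemoveEquiv (a : α) (s : Bool) (d : ℤ) (k : ℕ) :
    {x : Equiv.Perm α × (α → Bool) // SIP d k x ∧ x.1 a = a ∧ x.2 a = s} ≃
      {y : Equiv.Perm {b : α // b ≠ a} × ({b : α // b ≠ a} → Bool) //
        SIP (d - if s then 1 else -1) k y} where
  toFun x := ⟨(x.1.1.subtypePerm (x.2.1.hne x.2.2.1), fun b => x.1.2 b.1),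
    SIP.fixRemove_fwd x.2.1 x.2.2.1 x.2.2.2 _⟩
  invFun y := ⟨(Equiv.Perm.ofSubtype y.1.1, fun b => if h : b = a then s else y.1.2 ⟨b, h⟩), by
    refine ⟨?_, Equiv.Perm.ofSubtype_apply_of_not_mem _ (by simp), dif_pos rfl⟩
    have := y.2.fixRemove_bwd (s := s)
    rwa [sub_add_cancel] at this⟩
  left_inv x := by
    apply Subtype.ext
    apply Prod.ext
    · ext b
      dsimp only
      by_cases hb : b = a
      · subst hb
        rw [Equiv.Perm.ofSubtype_apply_of_not_mem _ (by simp), x.2.2.1]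
      · rw [Equiv.Perm.ofSubtype_apply_of_mem (x.val.1.subtypePerm (x.2.1.hne x.2.2.1)) hb]
        simp [Equiv.Perm.subtypePerm_apply]
    · funext b
      dsimp only
      by_cases hb : b = a
      · subst hb
        rw [dif_pos rfl, x.2.2.2]
      · rw [dif_neg hb]
  right_inv y := by
    apply Subtype.ext
    apply Prod.ext
    · ext b
      simp [Equiv.Perm.subtypePerm_apply, Subtype.ext_iff,
        Equiv.Perm.ofSubtype_apply_of_mem y.val.1 b.2]
    · funext b
      dsimp only
      rw [dif_neg b.2]

lemma SIP.hne2 {x : Equiv.Perm α × (α → Bool)} (hx : SIP d k x) {a a' : α}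
    (ha : x.1 a = a') :
    ∀ b : α, (x.1 b ≠ a ∧ x.1 b ≠ a') ↔ (b ≠ a ∧ b ≠ a') := by
  have ha' : x.1 a' = a := by rw [← ha, hx.invol]
  intro b
  rw [ne_eq (x.1 b), ne_eq (x.1 b) a', hx.eq_iff, hx.eq_iff, ha, ha']
  tauto

lemma SIP.pairRemove_fwd {σ : Equiv.Perm α} {ε : α → Bool} {a a' : α}
    (hx : SIP d (k + 1) (σ, ε)) (ha : σ a = a') (hne : a' ≠ a)
    (h' : ∀ b : α, (σ b ≠ a ∧ σ b ≠ a') ↔ (b ≠ a ∧ b ≠ a')) :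
    SIP d k (σ.subtypePerm h', fun b : {b : α // b ≠ a ∧ b ≠ a'} => ε b.1) := by
  have hinv : ∀ b, σ (σ b) = b := fun b => hx.invol b
  have ha' : σ a' = a := by rw [← ha, hinv]
  have h2 : ∀ i, σ i ≠ i → ε i = true := hx.1.2.1
  have h3 : ((univ.filter fun i => σ i = i ∧ ε i = true).card : ℤ)
      - ((univ.filter fun i => σ i = i ∧ ε i = false).card : ℤ) = d := hx.1.2.2
  have h4 : (univ.filter fun i => σ i ≠ i).card = 2 * (k + 1) := hx.2
  have hQ : ∀ (s' : Bool) (b : {b : α // b ≠ a ∧ b ≠ a'}),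
      ((σ.subtypePerm h') b = b ∧ ε b.1 = s') ↔ ((σ b.1 = b.1 ∧ ε b.1 = s')) := by
    intro s' b
    rw [Subtype.ext_iff, Equiv.Perm.subtypePerm_apply]
  have kT := card_filter_pair_subtype a a' hne (fun b => σ b = b ∧ ε b = true)
    (fun b => (σ.subtypePerm h') b = b ∧ ε b.1 = true) (hQ true)
  have kF := card_filter_pair_subtype a a' hne (fun b => σ b = b ∧ ε b = false)
    (fun b => (σ.subtypePerm h') b = b ∧ ε b.1 = false) (hQ false)
  have kM := card_filter_pair_subtype a a' hne (fun b => σ b ≠ b)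
    (fun b => (σ.subtypePerm h') b ≠ b)
    (fun b => by rw [ne_eq, ne_eq, Subtype.ext_iff, Equiv.Perm.subtypePerm_apply])
  have hfa : ¬ σ a = a := by rw [ha]; exact hne
  have hfa' : ¬ σ a' = a' := by rw [ha']; exact fun h => hne h.symm
  refine ⟨⟨?_, ?_, ?_⟩, ?_⟩
  · ext b
    simp [Equiv.Perm.subtypePerm_apply, Subtype.ext_iff, hinv]
  · intro b hb
    apply h2
    simpa [Subtype.ext_iff, Equiv.Perm.subtypePerm_apply] using hb
  · dsimp only
    rw [if_neg (by simp [hfa]), if_neg (by simp [hfa'])] at kT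
    rw [if_neg (by simp [hfa]), if_neg (by simp [hfa'])] at kF
    omega
  · dsimp only
    rw [if_pos hfa, if_pos hfa'] at kM
    omega

lemma SIP.pairRemove_bwd {a a' : α} (hne : a' ≠ a)
    {τ : Equiv.Perm {b : α // b ≠ a ∧ b ≠ a'}} {δ : {b : α // b ≠ a ∧ b ≠ a'} → Bool}
    (hy : SIP d k (τ, δ)) :
    SIP d (k + 1) (Equiv.swap a a' * Equiv.Perm.ofSubtype τ,
      fun b => if h : b = a then true else if h2 : b = a' then true else δ ⟨b, h, h2⟩) ∧
      (Equiv.swap a a' * Equiv.Perm.ofSubtype τ) a = a' := by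
  have h1 : τ * τ = 1 := hy.1.1
  have hτinv : ∀ b, τ (τ b) = b := fun b => hy.invol b
  have h2 : ∀ i, τ i ≠ i → δ i = true := hy.1.2.1
  have h3 : ((univ.filter fun i => τ i = i ∧ δ i = true).card : ℤ)
      - ((univ.filter fun i => τ i = i ∧ δ i = false).card : ℤ) = d := hy.1.2.2
  have h4 : (univ.filter fun i => τ i ≠ i).card = 2 * k := hy.2
  set E := Equiv.Perm.ofSubtype τ with hE
  have hEa : E a = a := Equiv.Perm.ofSubtype_apply_of_not_mem τ (by simp)
  have hEa' : E a' = a' := Equiv.Perm.ofSubtype_apply_of_not_mem τ (by simp)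
  have happ : ∀ b : {b : α // b ≠ a ∧ b ≠ a'}, E b.1 = (τ b).1 := by
    intro b
    rw [hE, Equiv.Perm.ofSubtype_apply_of_mem τ b.2]
  set σ := Equiv.swap a a' * E with hσ
  have hσa : σ a = a' := by rw [hσ, Equiv.Perm.mul_apply, hEa, Equiv.swap_apply_left]
  have hσa' : σ a' = a := by rw [hσ, Equiv.Perm.mul_apply, hEa', Equiv.swap_apply_right]
  have hσb : ∀ b : {b : α // b ≠ a ∧ b ≠ a'}, σ b.1 = (τ b).1 := by
    intro b
    rw [hσ, Equiv.Perm.mul_apply, happ b, Equiv.swap_apply_of_ne_of_ne (τ b).2.1 (τ b).2.2]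
  have hQ : ∀ (s' : Bool) (b : {b : α // b ≠ a ∧ b ≠ a'}),
      (τ b = b ∧ δ b = s') ↔
        (σ b.1 = b.1 ∧
          (if h : b.1 = a then true else if h2 : b.1 = a' then true else δ ⟨b.1, h, h2⟩) = s') := by
    intro s' b
    rw [hσb b, dif_neg b.2.1, dif_neg b.2.2, Subtype.ext_iff]
  have kT := card_filter_pair_subtype a a' hne
    (fun b => σ b = b ∧ (if h : b = a then true else if h2 : b = a' then true else δ ⟨b, h, h2⟩) = true)
    (fun b => τ b = b ∧ δ b = true) (hQ true)
  have kF := card_filter_pair_subtype a a' hne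
    (fun b => σ b = b ∧ (if h : b = a then true else if h2 : b = a' then true else δ ⟨b, h, h2⟩) = false)
    (fun b => τ b = b ∧ δ b = false) (hQ false)
  have kM := card_filter_pair_subtype a a' hne (fun b => σ b ≠ b)
    (fun b => τ b ≠ b)
    (fun b => by rw [ne_eq, ne_eq, hσb b, Subtype.ext_iff])
  have hfa : ¬ σ a = a := by rw [hσa]; exact hne
  have hfa' : ¬ σ a' = a' := by rw [hσa']; exact fun h => hne h.symm
  refine ⟨⟨⟨?_, ?_, ?_⟩, ?_⟩, hσa⟩
  · ext b
    rw [Equiv.Perm.mul_apply, Equiv.Perm.one_apply]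
    by_cases hb : b = a
    · subst hb; rw [hσa, hσa']
    by_cases hb' : b = a'
    · subst hb'; rw [hσa', hσa]
    · have e1 := hσb ⟨b, hb, hb'⟩
      dsimp only at e1
      rw [e1]
      have e2 := hσb (τ ⟨b, hb, hb'⟩)
      rw [e2, hτinv]
  · intro i hi
    dsimp only at hi ⊢
    by_cases hia : i = a
    · rw [dif_pos hia]
    by_cases hia' : i = a'
    · rw [dif_neg hia, dif_pos hia']
    · rw [dif_neg hia, dif_neg hia']
      apply h2
      intro hc
      apply hi
      have := hσb ⟨i, hia, hia'⟩
      dsimp only at this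
      rw [hc] at this
      exact this
  · dsimp only
    simp only [Finset.filter_congr_decidable] at kT kF h3 ⊢
    rw [if_neg (by simp [hfa]), if_neg (by simp [hfa'])] at kT
    rw [if_neg (by simp [hfa]), if_neg (by simp [hfa'])] at kF
    omega
  · dsimp only
    rw [if_pos hfa, if_pos hfa'] at kM
    omega

noncomputable def pairRemoveEquiv (a a' : α) (hne : a' ≠ a) (d : ℤ) (k : ℕ) :
    {x : Equiv.Perm α × (α → Bool) // SIP d (k + 1) x ∧ x.1 a = a'} ≃
      {y : Equiv.Perm {b : α // b ≠ a ∧ b ≠ a'} × ({b : α // b ≠ a ∧ b ≠ a'} → Bool) //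
        SIP d k y} where
  toFun x := ⟨(x.1.1.subtypePerm (x.2.1.hne2 x.2.2), fun b => x.1.2 b.1),
    SIP.pairRemove_fwd x.2.1 x.2.2 hne _⟩
  invFun y := ⟨(Equiv.swap a a' * Equiv.Perm.ofSubtype y.1.1,
      fun b => if h : b = a then true else if h2 : b = a' then true else y.1.2 ⟨b, h, h2⟩),
    ⟨(SIP.pairRemove_bwd hne y.2).1, (SIP.pairRemove_bwd hne y.2).2⟩⟩
  left_inv x := by
    obtain ⟨⟨σ, ε⟩, hx, ha⟩ := x
    have hinv : ∀ b, σ (σ b) = b := fun b => hx.invol b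
    have ha' : σ a' = a := by rw [← ha]; exact hinv a
    apply Subtype.ext
    apply Prod.ext
    · ext b
      dsimp only
      rw [Equiv.Perm.mul_apply]
      by_cases hb : b = a
      · subst hb
        rw [Equiv.Perm.ofSubtype_apply_of_not_mem _ (by simp), Equiv.swap_apply_left, ha]
      by_cases hb' : b = a'
      · subst hb'
        rw [Equiv.Perm.ofSubtype_apply_of_not_mem _ (by simp), Equiv.swap_apply_right, ha']
      · rw [Equiv.Perm.ofSubtype_apply_of_mem
          (σ.subtypePerm (SIP.hne2 hx ha)) (show b ≠ a ∧ b ≠ a' from ⟨hb, hb'⟩)]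
        have hmem := (SIP.hne2 hx ha b).mpr ⟨hb, hb'⟩
        simp only [Equiv.Perm.subtypePerm_apply]
        exact Equiv.swap_apply_of_ne_of_ne hmem.1 hmem.2
    · funext b
      dsimp only
      by_cases hb : b = a
      · rw [dif_pos hb]
        refine (hx.1.2.1 b ?_).symm
        show σ b ≠ b
        rw [hb, ha]
        exact hne
      by_cases hb' : b = a'
      · rw [dif_neg hb, dif_pos hb']
        refine (hx.1.2.1 b ?_).symm
        show σ b ≠ b
        rw [hb', ha']
        exact fun h => hne h.symm
      · rw [dif_neg hb, dif_neg hb']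
  right_inv y := by
    obtain ⟨⟨τ, δ⟩, hy⟩ := y
    have happ : ∀ b : {b : α // b ≠ a ∧ b ≠ a'},
        (Equiv.swap a a' * Equiv.Perm.ofSubtype τ) b.1 = (τ b).1 := by
      intro b
      rw [Equiv.Perm.mul_apply, Equiv.Perm.ofSubtype_apply_of_mem τ b.2,
        Equiv.swap_apply_of_ne_of_ne (τ b).2.1 (τ b).2.2]
    apply Subtype.ext
    apply Prod.ext
    · ext b
      dsimp only
      rw [Equiv.Perm.subtypePerm_apply]
      simpa using happ b
    · funext b
      dsimp only
      rw [dif_neg b.2.1, dif_neg b.2.2]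

lemma card_ne_fin (n : ℕ) (a : Fin (n + 1)) :
    Fintype.card {b : Fin (n + 1) // b ≠ a} = n := by
  rw [Fintype.card_subtype]
  rw [show (univ.filter fun b : Fin (n+1) => b ≠ a) = univ.erase a from by
    ext b; simp [Finset.mem_erase]]
  rw [Finset.card_erase_of_mem (mem_univ a), Finset.card_univ, Fintype.card_fin]
  omega

lemma card_ne2_fin (n : ℕ) (a a' : Fin (n + 2)) (h : a' ≠ a) :
    Fintype.card {b : Fin (n + 2) // b ≠ a ∧ b ≠ a'} = n := by
  rw [Fintype.card_subtype]
  rw [show (univ.filter fun b : Fin (n+2) => b ≠ a ∧ b ≠ a') = (univ.erase a).erase a' from by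
    ext b; simp [Finset.mem_erase]; tauto]
  rw [Finset.card_erase_of_mem (Finset.mem_erase.mpr ⟨h, mem_univ a'⟩),
    Finset.card_erase_of_mem (mem_univ a), Finset.card_univ, Fintype.card_fin]
  omega

lemma G_fiber (n : ℕ) (d : ℤ) (k : ℕ) :
    G (n + 1) d k = G n (d - 1) k + G n (d + 1) k +
      ∑ i : Fin n, Nat.card {x : Equiv.Perm (Fin (n + 1)) × (Fin (n + 1) → Bool) //
        SIP d k x ∧ x.1 0 = Fin.succ i} := by
  have h0 := natCard_fiber (β := Fin (n + 1))
    (fun x : {x : Equiv.Perm (Fin (n + 1)) × (Fin (n + 1) → Bool) // SIP d k x} => x.1.1 0)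
  have h1 : ∀ b : Fin (n + 1),
      Nat.card {x : {x : Equiv.Perm (Fin (n + 1)) × (Fin (n + 1) → Bool) // SIP d k x} //
        x.1.1 0 = b}
      = Nat.card {x : Equiv.Perm (Fin (n + 1)) × (Fin (n + 1) → Bool) //
          SIP d k x ∧ x.1 0 = b} := fun b =>
    Nat.card_congr (Equiv.subtypeSubtypeEquivSubtypeInter
      (fun x => SIP d k x) (fun x => x.1 0 = b))
  rw [show G (n + 1) d k
      = Nat.card {x : Equiv.Perm (Fin (n + 1)) × (Fin (n + 1) → Bool) // SIP d k x} from rfl,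
    h0, Fin.sum_univ_succ]
  simp only [h1]
  congr 1
  have hf : Nat.card {x : Equiv.Perm (Fin (n + 1)) × (Fin (n + 1) → Bool) //
      SIP d k x ∧ x.1 0 = 0}
      = ∑ s : Bool, Nat.card {y : {x : Equiv.Perm (Fin (n + 1)) × (Fin (n + 1) → Bool) //
          SIP d k x ∧ x.1 0 = 0} // y.1.2 0 = s} :=
    natCard_fiber (fun y : {x : Equiv.Perm (Fin (n + 1)) × (Fin (n + 1) → Bool) //
        SIP d k x ∧ x.1 0 = 0} => y.1.2 0)
  rw [hf, Fintype.sum_bool]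
  congr 1
  · refine Eq.trans (Nat.card_congr ?_) (G_card_eq (card_ne_fin n 0) (d - 1) k)
    exact ((Equiv.subtypeSubtypeEquivSubtypeInter
        (fun x => SIP d k x ∧ x.1 0 = 0) (fun x => x.2 0 = true)).trans
      (Equiv.subtypeEquivRight (fun x => by tauto))).trans (fixRemoveEquiv 0 true d k)
  · have e := ((Equiv.subtypeSubtypeEquivSubtypeInter
        (fun x : Equiv.Perm (Fin (n+1)) × (Fin (n+1) → Bool) => SIP d k x ∧ x.1 0 = 0)
        (fun x => x.2 0 = false)).trans
      (Equiv.subtypeEquivRight (fun x => by tauto))).trans (fixRemoveEquiv 0 false d k)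
    refine (Nat.card_congr e).trans ?_
    rw [show d - (if (false : Bool) then (1:ℤ) else -1) = d + 1 from by norm_num]
    exact G_card_eq (card_ne_fin n 0) (d + 1) k

lemma G_rec0 (n : ℕ) (d : ℤ) : G (n + 1) d 0 = G n (d - 1) 0 + G n (d + 1) 0 := by
  rw [G_fiber]
  have : ∀ i : Fin n, Nat.card {x : Equiv.Perm (Fin (n + 1)) × (Fin (n + 1) → Bool) //
      SIP d 0 x ∧ x.1 0 = Fin.succ i} = 0 := by
    intro i
    rw [Nat.card_eq_zero]
    left
    constructor
    rintro ⟨x, hx, h0⟩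
    have hmem : (0 : Fin (n + 1)) ∈ univ.filter fun j => x.1 j ≠ j := by
      simp only [mem_filter, mem_univ, true_and]
      rw [h0]
      exact (Fin.succ_ne_zero i)
    have := hx.2
    rw [Nat.mul_zero, Finset.card_eq_zero] at this
    rw [this] at hmem
    exact absurd hmem (Finset.notMem_empty _)
  simp [this]

lemma G_rec (n : ℕ) (d : ℤ) (k : ℕ) :
    G (n + 2) d (k + 1) = G (n + 1) (d - 1) (k + 1) + G (n + 1) (d + 1) (k + 1)
      + (n + 1) * G n d k := by
  rw [G_fiber]
  congr 1
  have : ∀ i : Fin (n + 1), Nat.card {x : Equiv.Perm (Fin (n + 2)) × (Fin (n + 2) → Bool) //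
      SIP d (k + 1) x ∧ x.1 0 = Fin.succ i} = G n d k := by
    intro i
    refine Eq.trans (Nat.card_congr (pairRemoveEquiv 0 i.succ (Fin.succ_ne_zero i) d k)) ?_
    exact G_card_eq (card_ne2_fin n 0 i.succ (Fin.succ_ne_zero i)) d k
  rw [Finset.sum_congr rfl fun i _ => this i, Finset.sum_const, Finset.card_univ,
    Fintype.card_fin, smul_eq_mul]

end core

lemma gamma_eq (k p q : ℕ) : gammaCount k p q = G (p + q) ((p : ℤ) - q) k := rfl


lemma Apoly_def (p q : ℕ) : Apoly p q
    = ∑ k ∈ Finset.range (q + 1), Polynomial.C (gammaCount k p q) * Polynomial.X ^ k := rfl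

theorem stmt11 :
    (∀ p : ℕ, Apoly p 0 = 1) ∧ (∀ q : ℕ, Apoly 0 q = 1) ∧
      ∀ p q : ℕ, 1 ≤ p → 1 ≤ q →
        Apoly p q =
          Apoly p (q - 1) + Apoly (p - 1) q +
            Polynomial.C (p + q - 1) * Polynomial.X * Apoly (p - 1) (q - 1) := by
  refine ⟨?_, ?_, ?_⟩
  · intro p
    rw [Apoly_def, Finset.sum_range_one]
    have h1 : gammaCount 0 p 0 = 1 := by
      rw [gamma_eq]
      have := G_const p true
      rw [if_pos rfl] at this
      simpa using this
    rw [h1]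
    simp
  · intro q
    rw [Apoly_def]
    have h0 : gammaCount 0 0 q = 1 := by
      rw [gamma_eq]
      have := G_const q false
      rw [if_neg (by simp)] at this
      simpa using this
    have hk : ∀ k, k ≠ 0 → gammaCount k 0 q = 0 := by
      intro k hke
      rw [gamma_eq]
      apply G_eq_zero
      right
      push_cast
      omega
    rw [Finset.sum_eq_single 0 (fun k _ hke => by rw [hk k hke]; simp)
      (fun h => absurd (Finset.mem_range.mpr (Nat.succ_pos q)) h)]
    rw [h0]
    simp
  · intro p q hp hq
    obtain ⟨a, rfl⟩ : ∃ a, p = a + 1 := ⟨p - 1, by omega⟩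
    obtain ⟨b, rfl⟩ : ∃ b, q = b + 1 := ⟨q - 1, by omega⟩
    simp only [Nat.add_sub_cancel]
    have hγ : ∀ k, gammaCount k (a+1) (b+1) = G (a+b+2) ((a:ℤ) - b) k := by
      intro k
      rw [gamma_eq, show (a+1) + (b+1) = a+b+2 from by omega,
        show ((a+1:ℕ):ℤ) - ((b+1:ℕ):ℤ) = (a:ℤ) - b from by push_cast; ring]
    have hu : ∀ k, gammaCount k (a+1) b = G (a+b+1) ((a:ℤ) - b + 1) k := by
      intro k
      rw [gamma_eq, show (a+1) + b = a+b+1 from by omega,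
        show ((a+1:ℕ):ℤ) - (b:ℤ) = (a:ℤ) - b + 1 from by push_cast; ring]
    have hv : ∀ k, gammaCount k a (b+1) = G (a+b+1) ((a:ℤ) - b - 1) k := by
      intro k
      rw [gamma_eq, show a + (b+1) = a+b+1 from by omega,
        show (a:ℤ) - ((b+1:ℕ):ℤ) = (a:ℤ) - b - 1 from by push_cast; ring]
    have hw : ∀ k, gammaCount k a b = G (a+b) ((a:ℤ) - b) k := by
      intro k; rw [gamma_eq]
    have key : ∀ k, gammaCount (k+1) (a+1) (b+1)
        = gammaCount (k+1) a (b+1) + gammaCount (k+1) (a+1) b + (a+b+1) * gammaCount k a b := by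
      intro k
      rw [hγ, hu, hv, hw]
      exact G_rec (a+b) _ k
    have key0 : gammaCount 0 (a+1) (b+1) = gammaCount 0 a (b+1) + gammaCount 0 (a+1) b := by
      rw [hγ, hu, hv]
      exact G_rec0 (a+b+1) _
    have hvan : gammaCount (b+1) (a+1) b = 0 := by
      rw [hu]
      apply G_eq_zero
      left
      push_cast
      omega
    rw [Apoly_def, Apoly_def, Apoly_def, Apoly_def]
    rw [Finset.sum_range_succ'
      (fun k => (Polynomial.C (gammaCount k (a+1) (b+1)) : Polynomial ℕ) * Polynomial.X ^ k)
      (b+1)]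
    have husum : ∑ k ∈ Finset.range (b+1+1),
        (Polynomial.C (gammaCount k (a+1) b) : Polynomial ℕ) * Polynomial.X ^ k
        = ∑ k ∈ Finset.range (b+1),
          (Polynomial.C (gammaCount k (a+1) b) : Polynomial ℕ) * Polynomial.X ^ k := by
      rw [Finset.sum_range_succ, hvan]
      simp
    rw [← husum]
    rw [Finset.sum_range_succ'
        (fun k => (Polynomial.C (gammaCount k (a+1) b) : Polynomial ℕ) * Polynomial.X ^ k) (b+1),
      Finset.sum_range_succ'
        (fun k => (Polynomial.C (gammaCount k a (b+1)) : Polynomial ℕ) * Polynomial.X ^ k) (b+1)]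
    have hcoef : a + 1 + (b + 1) - 1 = a + b + 1 := by omega
    rw [hcoef]
    rw [Finset.mul_sum]
    rw [show (∑ k ∈ Finset.range (b+1),
          (Polynomial.C (gammaCount (k+1) (a+1) (b+1)) : Polynomial ℕ) * Polynomial.X ^ (k+1))
        = ∑ k ∈ Finset.range (b+1),
          ((Polynomial.C (gammaCount (k+1) a (b+1)) : Polynomial ℕ) * Polynomial.X ^ (k+1)
            + Polynomial.C (gammaCount (k+1) (a+1) b) * Polynomial.X ^ (k+1)
            + Polynomial.C (a+b+1) * Polynomial.X
              * (Polynomial.C (gammaCount k a b) * Polynomial.X ^ k)) from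
      Finset.sum_congr rfl fun k _ => by
        rw [key k]
        simp only [map_add, map_mul, Nat.cast_add, Nat.cast_mul]
        ring]
    rw [Finset.sum_add_distrib, Finset.sum_add_distrib, key0]
    simp only [map_add]
    ring
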